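/- Let U be a nonprincipal ultrafilter on ℕ such that for every injective function f : ℕ → ℚ there is A ∈ U with f(A) nowhere dense in ℚ (i.e. U is weakly nowhere dense). Then for every function f : ℕ → ℚ there is A ∈ U with f(A) nowhere dense in ℚ (i.e. U is nowhere dense). -/

import Mathlib

lemma avoid (s : Finset ℚ) (x ε : ℚ) (hε : 0 < ε) : ∃ q : ℚ, |q - x| < ε ∧ q ∉ s := by
  have hinj : Function.Injective (fun k : ℕ => x + ε / (k + 2)) := by
    intro a b hab
    simp only [add_right_inj] at hab
    have ha : (0:ℚ) < (a:ℚ) + 2 := by positivity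
    have hb : (0:ℚ) < (b:ℚ) + 2 := by positivity
    rw [div_eq_div_iff ha.ne' hb.ne'] at hab
    have : ((a:ℚ)) = b := by
      have := mul_left_cancel₀ hε.ne' (by linarith : ε * ((a:ℚ)+2) = ε * ((b:ℚ)+2))
      linarith
    exact_mod_cast this
  obtain ⟨y, ⟨k, hk⟩, hy⟩ := (Set.infinite_range_of_injective hinj).exists_notMem_finset s
  refine ⟨y, ?_, hy⟩
  have hk2 : (0:ℚ) < (k:ℚ) + 2 := by positivity
  rw [← hk]
  simp only [add_sub_cancel_left, abs_div]
  rw [abs_of_pos hε, abs_of_pos hk2, div_lt_iff₀ hk2]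
  nlinarith

noncomputable def tweak (f : ℕ → ℚ) (n : ℕ) : ℚ :=
  Classical.choose (avoid
      (((Finset.range n).attach).image (fun (m : {x // x ∈ Finset.range n}) =>
        have : m.1 < n := Finset.mem_range.mp m.2
        tweak f m.1))
      (f n) ((2:ℚ)⁻¹ ^ n) (by positivity))
  termination_by n

lemma tweak_spec (f : ℕ → ℚ) (n : ℕ) :
    |tweak f n - f n| < (2:ℚ)⁻¹ ^ n ∧ ∀ m < n, tweak f n ≠ tweak f m := by
  have := Classical.choose_spec (avoid
      (((Finset.range n).attach).image (fun (m : {x // x ∈ Finset.range n}) =>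
        tweak f m.1))
      (f n) ((2:ℚ)⁻¹ ^ n) (by positivity))
  rw [tweak.eq_def]
  refine ⟨this.1, fun m hm hne => this.2 ?_⟩
  exact Finset.mem_image.mpr ⟨⟨m, Finset.mem_range.mpr hm⟩, Finset.mem_attach _ _, hne.symm⟩

lemma tweak_inj (f : ℕ → ℚ) : Function.Injective (tweak f) := by
  intro a b hab
  rcases lt_trichotomy a b with h | h | h
  · exact absurd hab.symm ((tweak_spec f b).2 a h)
  · exact h
  · exact absurd hab ((tweak_spec f a).2 b h)

/-- Every weakly nowhere dense ultrafilter is nowhere dense. -/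
theorem weakly_nwd_is_nwd (U : Ultrafilter ℕ)
    (hU : ∀ s : Set ℕ, s.Finite → s ∉ U)
    (h : ∀ f : ℕ → ℚ, Function.Injective f → ∃ A ∈ U, IsNowhereDense (f '' A)) :
    ∀ f : ℕ → ℚ, ∃ A ∈ U, IsNowhereDense (f '' A) := by
  intro f
  set g := tweak f with hg
  have hg_close : ∀ n, dist (g n) (f n) < (2:ℝ)⁻¹ ^ n := by
    intro n
    have := (tweak_spec f n).1
    rw [Rat.dist_eq]
    push_cast
    have : |(g n : ℝ) - (f n : ℝ)| < ((2:ℚ)⁻¹ ^ n : ℚ) := by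
      rw [show |(g n : ℝ) - (f n : ℝ)| = ((|g n - f n| : ℚ) : ℝ) by push_cast; ring_nf]
      exact_mod_cast this
    calc |(g n : ℝ) - (f n : ℝ)| < ((2:ℚ)⁻¹ ^ n : ℚ) := this
      _ = (2:ℝ)⁻¹ ^ n := by push_cast; ring
  obtain ⟨A, hA, hAnd⟩ := h g (tweak_inj f)
  set N := closure (g '' A) with hN
  have hNint : interior N = ∅ := hAnd
  have hNclosed : IsClosed N := isClosed_closure
  -- key lemma
  have key : ∀ (B : Set ℕ), B ⊆ A → ∀ x : ℚ, x ∈ closure (f '' B \ {x}) → x ∈ N := by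
    intro B hBA x hx
    rw [hN, Metric.mem_closure_iff]
    intro ε hε
    obtain ⟨M, hM⟩ : ∃ M : ℕ, (2:ℝ)⁻¹ ^ M < ε / 2 :=
      exists_pow_lt_of_lt_one (by linarith) (by norm_num)
    set F : Set ℚ := f '' (B ∩ Set.Iio M) \ {x} with hF
    have hFfin : F.Finite := (((Set.finite_Iio M).inter_of_right B).image f).diff
    have hxF : x ∉ F := fun hxF => hxF.2 rfl
    have : Fᶜ ∈ nhds x := hFfin.isClosed.isOpen_compl.mem_nhds hxF
    obtain ⟨δ, hδpos, hδ⟩ := Metric.mem_nhds_iff.mp this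
    rw [Metric.mem_closure_iff] at hx
    obtain ⟨y, hy, hxy⟩ := hx (min δ (ε/2)) (by positivity)
    obtain ⟨⟨m, hmB, hmfy⟩, hyx⟩ := hy
    have hyF : y ∉ F := hδ (by
      rw [Metric.mem_ball, dist_comm]
      exact lt_of_lt_of_le hxy (min_le_left _ _))
    have hmM : M ≤ m := by
      by_contra hlt
      exact hyF ⟨⟨m, ⟨hmB, not_le.mp hlt⟩, hmfy⟩, hyx⟩
    refine ⟨g m, Set.mem_image_of_mem g (hBA hmB), ?_⟩
    have h1 : dist x (g m) ≤ dist x y + dist (f m) (g m) := by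
      rw [hmfy]; exact dist_triangle _ _ _
    have h2 : dist (f m) (g m) < (2:ℝ)⁻¹ ^ M := by
      rw [dist_comm]
      calc dist (g m) (f m) < (2:ℝ)⁻¹ ^ m := hg_close m
        _ ≤ (2:ℝ)⁻¹ ^ M := pow_le_pow_of_le_one (by norm_num) (by norm_num) hmM
    have h3 : dist x y < ε / 2 := lt_of_lt_of_le hxy (min_le_right _ _)
    linarith
  -- split A by whether f n ∈ N
  rcases Ultrafilter.mem_or_compl_mem U {n | f n ∈ N} with hS | hS
  · refine ⟨A ∩ {n | f n ∈ N}, Filter.inter_mem hA hS, ?_⟩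
    have hsub : f '' (A ∩ {n | f n ∈ N}) ⊆ N := by
      rintro _ ⟨n, ⟨_, hn⟩, rfl⟩; exact hn
    rw [IsNowhereDense]
    have : closure (f '' (A ∩ {n | f n ∈ N})) ⊆ N := hNclosed.closure_subset_iff.mpr hsub
    rw [← Set.subset_empty_iff, ← hNint]
    exact interior_mono this
  · set B := A ∩ {n | f n ∈ N}ᶜ with hB
    have hBU : B ∈ U := U.toFilter.inter_mem hA hS
    refine ⟨B, hBU, ?_⟩
    rw [IsNowhereDense, Set.eq_empty_iff_forall_notMem]
    intro x hx
    set V := interior (closure (f '' B)) with hV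
    have hVopen : IsOpen V := isOpen_interior
    -- closure (f '' B) ⊆ f '' B ∪ N
    have hclos : closure (f '' B) ⊆ f '' B ∪ N := by
      intro z hz
      by_cases hzB : z ∈ f '' B
      · exact Or.inl hzB
      · refine Or.inr (key B Set.inter_subset_left z ?_)
        rwa [Set.diff_singleton_eq_self hzB]
    -- find a point of V outside N
    have hVN : ¬ V ⊆ N := by
      intro hsub
      have : V ⊆ interior N := by
        rw [← hVopen.interior_eq]; exact interior_mono hsub
      rw [hNint] at this
      exact this hx
    obtain ⟨x', hx'V, hx'N⟩ := Set.not_subset.mp hVN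
    -- W := V \ N is an open nbhd of x' contained in f '' B
    have hWopen : IsOpen (V \ N) := hVopen.sdiff hNclosed
    have hWsub : V \ N ⊆ f '' B := by
      intro z hz
      rcases hclos (interior_subset hz.1) with h1 | h1
      · exact h1
      · exact absurd h1 hz.2
    -- x' is an accumulation point of f '' B
    have hacc : x' ∈ closure (f '' B \ {x'}) := by
      rw [Metric.mem_closure_iff]
      intro ε hε
      obtain ⟨δ, hδpos, hδ⟩ := Metric.isOpen_iff.mp hWopen x' ⟨hx'V, hx'N⟩
      obtain ⟨q, hq1, hq2⟩ := exists_rat_btwn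
        (show ((x':ℝ)) < x' + min δ ε from lt_add_of_pos_right _ (lt_min hδpos hε))
      have hdq : dist x' q < min δ ε := by
        rw [Rat.dist_eq, abs_sub_comm, abs_of_pos (by linarith)]
        linarith
      have hqW : (q : ℚ) ∈ V \ N := hδ (by
        rw [Metric.mem_ball, dist_comm]
        exact lt_of_lt_of_le hdq (min_le_left _ _))
      refine ⟨q, ⟨hWsub hqW, ?_⟩, lt_of_lt_of_le hdq (min_le_right _ _)⟩
      intro hqx
      rw [Set.mem_singleton_iff] at hqx
      rw [hqx] at hq1
      exact lt_irrefl _ hq1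
    exact hx'N (key B Set.inter_subset_left x' hacc)
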